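/- Let L be an integrable real random variable on a probability space (Ω,𝓕,P), let 0 < a < 1 and 0 ≤ b < 1, and set λ(a,b) = (1−a)/(1−ab). Then the optimized certainty equivalent satisfies R_{a,b}(L) = (1−b)·ES_{λ(a,b)}(L) + b·E[L]. -/

import Mathlib

open MeasureTheory Filter Topology Real Set
open scoped ENNReal

/-- Left-quantile function: `q_L(u) = inf {m : P[L ≤ m] ≥ u}`. -/
noncomputable def leftQuantile {Ω : Type*} [MeasurableSpace Ω] (P : Measure Ω)
    (L : Ω → ℝ) (u : ℝ) : ℝ :=
  sInf {m : ℝ | u ≤ (P {ω | L ω ≤ m}).toReal}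

/-- Expected shortfall: `ES_α(L) = (1/(1-α)) ∫_α^1 q_L(u) du`. -/
noncomputable def ES {Ω : Type*} [MeasurableSpace Ω] (P : Measure Ω)
    (L : Ω → ℝ) (α : ℝ) : ℝ :=
  (1 - α)⁻¹ * ∫ u in α..1, leftQuantile P L u

/-- The α-expectile is the (unique) `e` with `α E[(L-e)⁺] = (1-α) E[(L-e)⁻]`. -/
def IsExpectile {Ω : Type*} [MeasurableSpace Ω] (P : Measure Ω)
    (L : Ω → ℝ) (α e : ℝ) : Prop :=
  α * ∫ ω, max (L ω - e) 0 ∂P = (1 - α) * ∫ ω, max (e - L ω) 0 ∂P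

/-- Loss function `ℓ_{a,b}(x) = x⁺/a - b x⁻`. -/
noncomputable def lossFn (a b x : ℝ) : ℝ := max x 0 / a - b * max (-x) 0

/-- Optimized certainty equivalent `R_{a,b}(L) = inf { m + E[ℓ_{a,b}(L-m)] }`. -/
noncomputable def OCE {Ω : Type*} [MeasurableSpace Ω] (P : Measure Ω)
    (L : Ω → ℝ) (a b : ℝ) : ℝ :=
  sInf {r : ℝ | ∃ m : ℝ, r = m + ∫ ω, lossFn a b (L ω - m) ∂P}

/-- `g` is regularly varying at infinity with index `ρ`. -/
def RegularlyVarying (g : ℝ → ℝ) (ρ : ℝ) : Prop :=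
  ∀ x : ℝ, 0 < x → Tendsto (fun t => g (t * x) / g t) atTop (𝓝 (x ^ ρ))

/-- `g` is of second-order regular variation with indices `-η`, `ρ` and auxiliary function `A`. -/
def SecondOrderRV (g : ℝ → ℝ) (η ρ : ℝ) (A : ℝ → ℝ) : Prop :=
  RegularlyVarying g (-η) ∧
  Tendsto A atTop (𝓝 0) ∧
  ((∀ᶠ t in atTop, 0 < A t) ∨ (∀ᶠ t in atTop, A t < 0)) ∧
  ∀ x : ℝ, 0 < x →
    Tendsto (fun t => (g (t * x) / g t - x ^ (-η)) / A t) atTop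
      (𝓝 (if ρ = 0 then x ^ (-η) * Real.log x else x ^ (-η) * (x ^ ρ - 1) / ρ))

/-- Empirical measure `(1/n) ∑_{k<n} δ_{L_k(ω)}` of the first `n` samples. -/
noncomputable def empMeasure {Ω : Type*} [MeasurableSpace Ω] (L : ℕ → Ω → ℝ)
    (n : ℕ) (ω : Ω) : Measure ℝ :=
  (n : ℝ≥0∞)⁻¹ • ∑ k ∈ Finset.range n, Measure.dirac (L k ω)

section CDF
variable {Ω : Type*} [MeasurableSpace Ω] (P : Measure Ω) [IsProbabilityMeasure P]
  (L : Ω → ℝ) (hL : Measurable L)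

/-- distribution function -/
noncomputable def Fdist (m : ℝ) : ℝ := (P {ω | L ω ≤ m}).toReal

lemma Fdist_mono : Monotone (Fdist P L) := fun x y hxy =>
  ENNReal.toReal_mono (measure_ne_top _ _)
    (measure_mono fun ω (h : L ω ≤ x) => le_trans h hxy)

lemma Fdist_nonneg (m : ℝ) : 0 ≤ Fdist P L m := ENNReal.toReal_nonneg

lemma Fdist_le_one (m : ℝ) : Fdist P L m ≤ 1 := by
  have := measure_mono (μ := P) (subset_univ {ω | L ω ≤ m})
  simpa [Fdist, measure_univ] using ENNReal.toReal_mono (by simp) this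

include hL in
lemma Fdist_tendsto_one : Tendsto (fun n : ℕ => Fdist P L n) atTop (𝓝 1) := by
  have h1 : Tendsto (fun n : ℕ => P {ω | L ω ≤ (n : ℝ)}) atTop (𝓝 (P univ)) := by
    have hmono : Monotone (fun n : ℕ => {ω | L ω ≤ (n : ℝ)}) := by
      intro i j hij ω (h : L ω ≤ i)
      exact le_trans h (by exact_mod_cast hij)
    have huniv : (⋃ n : ℕ, {ω | L ω ≤ (n : ℝ)}) = univ := by
      ext ω
      simp only [mem_univ, mem_iUnion, iff_true, mem_setOf_eq]
      exact exists_nat_ge (L ω)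
    have := tendsto_measure_iUnion_atTop (μ := P) hmono
    rw [huniv] at this
    exact this
  rw [measure_univ] at h1
  have := (ENNReal.tendsto_toReal (by simp)).comp h1
  simpa [Fdist, Function.comp_def] using this

include hL in
lemma Fdist_tendsto_zero : Tendsto (fun n : ℕ => Fdist P L (-(n : ℝ))) atTop (𝓝 0) := by
  have h1 : Tendsto (fun n : ℕ => P {ω | L ω ≤ -(n : ℝ)}) atTop (𝓝 (P (⋂ n : ℕ, {ω | L ω ≤ -(n : ℝ)}))) := by
    have hanti : Antitone (fun n : ℕ => {ω | L ω ≤ -(n : ℝ)}) := by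
      intro i j hij ω (h : L ω ≤ -(j:ℝ))
      refine le_trans h ?_
      have : (i:ℝ) ≤ j := by exact_mod_cast hij
      linarith
    have := tendsto_measure_iInter_atTop (μ := P)
      (fun n => (hL measurableSet_Iic).nullMeasurableSet) hanti ⟨0, measure_ne_top _ _⟩
    exact this
  have hempty : (⋂ n : ℕ, {ω | L ω ≤ -(n : ℝ)}) = ∅ := by
    ext ω
    simp only [mem_iInter, mem_setOf_eq, mem_empty_iff_false, iff_false, not_forall, not_le]
    obtain ⟨n, hn⟩ := exists_nat_ge (-(L ω))
    exact ⟨n+1, by push_cast; linarith⟩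
  rw [hempty, measure_empty] at h1
  have := (ENNReal.tendsto_toReal (by simp)).comp h1
  simpa [Fdist, Function.comp_def] using this

include hL in
/-- right continuity along x + 1/(n+1) -/
lemma Fdist_tendsto_right (x : ℝ) :
    Tendsto (fun n : ℕ => Fdist P L (x + 1 / (n + 1))) atTop (𝓝 (Fdist P L x)) := by
  have h1 : Tendsto (fun n : ℕ => P {ω | L ω ≤ x + 1 / (n + 1)}) atTop
      (𝓝 (P (⋂ n : ℕ, {ω | L ω ≤ x + 1 / ((n : ℝ) + 1)}))) := by
    have hanti : Antitone (fun n : ℕ => {ω | L ω ≤ x + 1 / ((n:ℝ) + 1)}) := by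
      intro i j hij ω (h : L ω ≤ x + 1 / ((j:ℝ) + 1))
      refine le_trans h ?_
      have hij' : ((i:ℝ) + 1) ≤ (j:ℝ) + 1 := by
        have : (i:ℝ) ≤ j := by exact_mod_cast hij
        linarith
      have : (1 : ℝ) / ((j:ℝ) + 1) ≤ 1 / ((i:ℝ) + 1) :=
        one_div_le_one_div_of_le (by positivity) hij'
      linarith
    have := tendsto_measure_iInter_atTop (μ := P)
      (fun n => (hL measurableSet_Iic).nullMeasurableSet) hanti ⟨0, measure_ne_top _ _⟩
    exact this
  have hset : (⋂ n : ℕ, {ω | L ω ≤ x + 1 / ((n : ℝ) + 1)}) = {ω | L ω ≤ x} := by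
    ext ω
    simp only [mem_iInter, mem_setOf_eq]
    constructor
    · intro h
      refine le_of_forall_pos_le_add fun ε hε => ?_
      obtain ⟨n, hn⟩ := exists_nat_one_div_lt hε
      exact le_trans (h n) (by push_cast; linarith)
    · intro h n
      have : (0:ℝ) < 1 / ((n:ℝ) + 1) := by positivity
      linarith
  rw [hset] at h1
  have := (ENNReal.tendsto_toReal (by simp)).comp h1
  simpa [Fdist, Function.comp_def] using this

/-- the defining set of the quantile -/
lemma qset_nonempty (hL : Measurable L) {u : ℝ} (hu1 : u < 1) :
    {m : ℝ | u ≤ Fdist P L m}.Nonempty := by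
  have := (Fdist_tendsto_one P L hL).eventually (eventually_gt_nhds hu1)
  obtain ⟨n, hn⟩ := this.exists
  exact ⟨n, hn.le⟩

lemma qset_bddBelow (hL : Measurable L) {u : ℝ} (hu0 : 0 < u) :
    BddBelow {m : ℝ | u ≤ Fdist P L m} := by
  have := (Fdist_tendsto_zero P L hL).eventually (eventually_lt_nhds hu0)
  obtain ⟨n, hn⟩ := this.exists
  refine ⟨-(n : ℝ), fun m hm => ?_⟩
  by_contra hc
  push_neg at hc
  exact absurd (le_trans hm (Fdist_mono P L hc.le)) (not_le.2 hn)

include hL in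
lemma leftQuantile_le_iff {u x : ℝ} (hu0 : 0 < u) (hu1 : u < 1) :
    leftQuantile P L u ≤ x ↔ u ≤ Fdist P L x := by
  constructor
  · intro h
    have key : ∀ n : ℕ, u ≤ Fdist P L (x + 1 / (n + 1)) := by
      intro n
      have hlt : sInf {m : ℝ | u ≤ Fdist P L m} < x + 1 / ((n:ℝ) + 1) :=
        lt_of_le_of_lt h (lt_add_of_pos_right x (by positivity))
      obtain ⟨m, hm, hmlt⟩ := exists_lt_of_csInf_lt (qset_nonempty P L hL hu1) hlt
      exact le_trans hm (Fdist_mono P L hmlt.le)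
    exact ge_of_tendsto (Fdist_tendsto_right P L hL x) (Eventually.of_forall key)
  · intro h
    exact csInf_le (qset_bddBelow P L hL hu0) h

include hL in
lemma leftQuantile_mono {u v : ℝ} (hu0 : 0 < u) (huv : u ≤ v) (hv1 : v < 1) :
    leftQuantile P L u ≤ leftQuantile P L v := by
  apply csInf_le_csInf (qset_bddBelow P L hL hu0) (qset_nonempty P L hL hv1)
  exact fun m hm => le_trans huv hm

end CDF

section Push
variable {Ω : Type*} [MeasurableSpace Ω] (P : Measure Ω) [IsProbabilityMeasure P]
  (L : Ω → ℝ) (hL : Measurable L)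

/-- Lebesgue measure on (0,1) -/
noncomputable def unif : Measure ℝ := volume.restrict (Ioo (0:ℝ) 1)

instance : IsProbabilityMeasure (unif) :=
  ⟨by simp [unif, Measure.restrict_apply, Real.volume_Ioo]⟩

include hL in
lemma leftQuantile_aemeasurable :
    AEMeasurable (leftQuantile P L) unif := by
  apply aemeasurable_restrict_of_monotoneOn measurableSet_Ioo
  intro u hu v hv huv
  exact leftQuantile_mono P L hL hu.1 huv hv.2

include hL in
lemma map_leftQuantile :
    Measure.map (leftQuantile P L) unif = Measure.map L P := by
  haveI : IsProbabilityMeasure (Measure.map (leftQuantile P L) unif) :=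
    Measure.isProbabilityMeasure_map (leftQuantile_aemeasurable P L hL)
  apply Measure.ext_of_Iic
  intro x
  rw [Measure.map_apply_of_aemeasurable (leftQuantile_aemeasurable P L hL) measurableSet_Iic,
    Measure.map_apply hL measurableSet_Iic, unif, Measure.restrict_apply' measurableSet_Ioo]
  have hset : leftQuantile P L ⁻¹' Iic x ∩ Ioo 0 1 = Ioo 0 1 ∩ Iic (Fdist P L x) := by
    ext u
    simp only [mem_inter_iff, mem_preimage, mem_Iic, mem_Ioo]
    constructor
    · rintro ⟨hq, hu0, hu1⟩
      exact ⟨⟨hu0, hu1⟩, (leftQuantile_le_iff P L hL hu0 hu1).1 hq⟩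
    · rintro ⟨⟨hu0, hu1⟩, hu⟩
      exact ⟨(leftQuantile_le_iff P L hL hu0 hu1).2 hu, hu0, hu1⟩
  rw [hset]
  have h0 : 0 ≤ Fdist P L x := Fdist_nonneg P L x
  have h1 : Fdist P L x ≤ 1 := Fdist_le_one P L x
  have hvol : volume (Ioo 0 1 ∩ Iic (Fdist P L x)) = ENNReal.ofReal (Fdist P L x) := by
    rcases eq_or_lt_of_le h1 with h1e | h1l
    · have : Ioo (0:ℝ) 1 ∩ Iic (Fdist P L x) = Ioo 0 1 := by
        apply inter_eq_left.2
        intro u hu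
        simp only [mem_Iic, h1e]
        exact hu.2.le
      rw [this, Real.volume_Ioo, ← h1e]
      norm_num
    · have : Ioo (0:ℝ) 1 ∩ Iic (Fdist P L x) = Ioc 0 (Fdist P L x) := by
        ext u
        simp only [mem_inter_iff, mem_Ioo, mem_Iic, mem_Ioc]
        constructor
        · rintro ⟨⟨h0u, _⟩, hu⟩; exact ⟨h0u, hu⟩
        · rintro ⟨h0u, hu⟩; exact ⟨⟨h0u, lt_of_le_of_lt hu h1l⟩, hu⟩
      rw [this, Real.volume_Ioc]
      norm_num
  rw [hvol, Fdist, ENNReal.ofReal_toReal (measure_ne_top _ _)]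
  rfl

include hL in
lemma integral_comp_leftQuantile {g : ℝ → ℝ} (hg : Continuous g) :
    ∫ u, g (leftQuantile P L u) ∂unif = ∫ ω, g (L ω) ∂P := by
  rw [← integral_map (leftQuantile_aemeasurable P L hL)
    (hg.aestronglyMeasurable), map_leftQuantile P L hL,
    integral_map hL.aemeasurable hg.aestronglyMeasurable]

include hL in
lemma integrable_comp_leftQuantile {g : ℝ → ℝ} (hg : Continuous g)
    (hgi : Integrable (fun ω => g (L ω)) P) :
    Integrable (fun u => g (leftQuantile P L u)) unif := by
  have h1 : Integrable g (Measure.map L P) :=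
    (integrable_map_measure hg.aestronglyMeasurable hL.aemeasurable).2 hgi
  rw [← map_leftQuantile P L hL] at h1
  exact (integrable_map_measure hg.aestronglyMeasurable
    (leftQuantile_aemeasurable P L hL)).1 h1

end Push

section RU
variable {Ω : Type*} [MeasurableSpace Ω] (P : Measure Ω) [IsProbabilityMeasure P]
  (L : Ω → ℝ) (hL : Measurable L) (hLi : Integrable L P)

lemma unif_def : unif = volume.restrict (Ioo (0:ℝ) 1) := rfl

include hL hLi in
lemma leftQuantile_integrableOn :
    IntegrableOn (leftQuantile P L) (Ioo (0:ℝ) 1) volume := by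
  have := integrable_comp_leftQuantile P L hL (g := id) continuous_id (by simpa using hLi)
  simpa [unif_def, IntegrableOn] using this

include hL hLi in
lemma pospart_integrableOn (m : ℝ) :
    IntegrableOn (fun u => max (leftQuantile P L u - m) 0) (Ioo (0:ℝ) 1) volume := by
  have hg : Continuous (fun x : ℝ => max (x - m) 0) :=
    (continuous_id.sub continuous_const).max continuous_const
  have hgi : Integrable (fun ω => max (L ω - m) 0) P := (hLi.sub (integrable_const m)).pos_part
  have := integrable_comp_leftQuantile P L hL hg hgi
  simpa [unif_def, IntegrableOn] using this

include hL in
lemma pospart_transfer (m : ℝ) :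
    ∫ ω, max (L ω - m) 0 ∂P = ∫ u in Ioo (0:ℝ) 1, max (leftQuantile P L u - m) 0 := by
  have hg : Continuous (fun x : ℝ => max (x - m) 0) :=
    (continuous_id.sub continuous_const).max continuous_const
  rw [← integral_comp_leftQuantile P L hL hg, unif_def]

include hL hLi in
lemma integral_sub_const {lam m : ℝ} (hlam0 : 0 < lam) (hlam1 : lam < 1) :
    ∫ u in Ioc lam 1, (leftQuantile P L u - m) =
      (∫ u in Ioc lam 1, leftQuantile P L u) - (1 - lam) * m := by
  have hqI : IntegrableOn (leftQuantile P L) (Ioc lam 1) volume :=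
    ((leftQuantile_integrableOn P L hL hLi).mono_set
      (Ioo_subset_Ioo hlam0.le le_rfl)).congr_set_ae (Ioo_ae_eq_Ioc).symm
  rw [integral_sub hqI (integrableOn_const measure_Ioc_lt_top.ne)]
  rw [setIntegral_const, Real.volume_real_Ioc_of_le (by linarith), smul_eq_mul]

include hL hLi in
lemma RU_lower {lam : ℝ} (hlam0 : 0 < lam) (hlam1 : lam < 1) (m : ℝ) :
    (1 - lam)⁻¹ * ∫ u in Ioc lam 1, leftQuantile P L u ≤
      m + (1 - lam)⁻¹ * ∫ ω, max (L ω - m) 0 ∂P := by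
  set q := leftQuantile P L with hq
  have hPI : IntegrableOn (fun u => max (q u - m) 0) (Ioo (0:ℝ) 1) volume :=
    pospart_integrableOn P L hL hLi m
  have hqI : IntegrableOn q (Ioc lam 1) volume :=
    ((leftQuantile_integrableOn P L hL hLi).mono_set
      (Ioo_subset_Ioo hlam0.le le_rfl)).congr_set_ae (Ioo_ae_eq_Ioc).symm
  have hsub : Ioc lam 1 ≤ᵐ[volume] Ioo (0:ℝ) 1 := by
    refine (Ioo_ae_eq_Ioc (μ := volume) (a := lam) (b := 1)).symm.le.trans ?_
    exact HasSubset.Subset.eventuallyLE (Ioo_subset_Ioo hlam0.le le_rfl)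
  have h2 : ∫ u in Ioc lam 1, max (q u - m) 0 ≤ ∫ u in Ioo (0:ℝ) 1, max (q u - m) 0 :=
    setIntegral_mono_set hPI (Eventually.of_forall fun u => le_max_right _ _) hsub
  have h3 : ∫ u in Ioc lam 1, (q u - m) ≤ ∫ u in Ioc lam 1, max (q u - m) 0 := by
    exact setIntegral_mono_on
      (hqI.sub (integrableOn_const measure_Ioc_lt_top.ne))
      ((hPI.mono_set (Ioo_subset_Ioo hlam0.le le_rfl)).congr_set_ae Ioo_ae_eq_Ioc.symm)
      measurableSet_Ioc
      (fun u _ => le_max_left _ _)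
  have h4 := integral_sub_const P L hL hLi (m := m) hlam0 hlam1
  have h1 := pospart_transfer P L hL m
  have hc0 : (0:ℝ) < (1 - lam)⁻¹ := inv_pos.2 (by linarith)
  have hc1 : (1 - lam)⁻¹ * (1 - lam) = 1 := inv_mul_cancel₀ (by linarith)
  have hchain : (∫ u in Ioc lam 1, q u) - (1 - lam) * m ≤ ∫ ω, max (L ω - m) 0 ∂P := by
    rw [← h4, h1]
    exact le_trans h3 h2
  have h5 := mul_le_mul_of_nonneg_left hchain hc0.le
  rw [mul_sub, ← mul_assoc, hc1, one_mul] at h5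
  linarith

include hL hLi in
lemma RU_eq {lam : ℝ} (hlam0 : 0 < lam) (hlam1 : lam < 1) :
    leftQuantile P L lam + (1 - lam)⁻¹ * ∫ ω, max (L ω - leftQuantile P L lam) 0 ∂P =
      (1 - lam)⁻¹ * ∫ u in Ioc lam 1, leftQuantile P L u := by
  set q := leftQuantile P L with hq
  set m0 := q lam with hm0
  have hPI : IntegrableOn (fun u => max (q u - m0) 0) (Ioo (0:ℝ) 1) volume :=
    pospart_integrableOn P L hL hLi m0
  have hunion : Ioc (0:ℝ) lam ∪ Ioo lam 1 = Ioo 0 1 := Ioc_union_Ioo_eq_Ioo hlam0.le hlam1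
  have hdisj : Disjoint (Ioc (0:ℝ) lam) (Ioo lam 1) := by
    rw [Set.disjoint_left]
    rintro u ⟨_, hu2⟩ ⟨hu3, _⟩
    exact absurd hu3 (not_lt.2 hu2)
  have hsplit : ∫ u in Ioo (0:ℝ) 1, max (q u - m0) 0 =
      (∫ u in Ioc (0:ℝ) lam, max (q u - m0) 0) + ∫ u in Ioo lam 1, max (q u - m0) 0 := by
    rw [← hunion] at hPI ⊢
    rw [setIntegral_union hdisj measurableSet_Ioo (hPI.mono_set subset_union_left)
      (hPI.mono_set subset_union_right)]
  have hzero : ∫ u in Ioc (0:ℝ) lam, max (q u - m0) 0 = 0 := by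
    rw [setIntegral_congr_fun measurableSet_Ioc (g := fun _ => (0:ℝ))]
    · simp
    · intro u hu
      have : q u ≤ m0 := leftQuantile_mono P L hL hu.1 hu.2 hlam1
      simp only
      rw [max_eq_right (by linarith)]
  have hright : ∫ u in Ioo lam 1, max (q u - m0) 0 = ∫ u in Ioo lam 1, (q u - m0) := by
    apply setIntegral_congr_fun measurableSet_Ioo
    intro u hu
    have : m0 ≤ q u := leftQuantile_mono P L hL hlam0 hu.1.le hu.2
    simp only
    rw [max_eq_left (by linarith)]
  have h1 := pospart_transfer P L hL m0
  have h4 := integral_sub_const P L hL hLi (m := m0) hlam0 hlam1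
  have hIooIoc : ∫ u in Ioo lam 1, (q u - m0) = ∫ u in Ioc lam 1, (q u - m0) :=
    setIntegral_congr_set Ioo_ae_eq_Ioc
  have hc1 : (1 - lam)⁻¹ * (1 - lam) = 1 := inv_mul_cancel₀ (by linarith)
  have key : ∫ ω, max (L ω - m0) 0 ∂P = (∫ u in Ioc lam 1, q u) - (1 - lam) * m0 := by
    rw [h1, hsplit, hzero, hright, zero_add, hIooIoc, h4]
  rw [key, mul_sub, ← mul_assoc, hc1, one_mul]
  ring

end RU

section Main
variable {Ω : Type*} [MeasurableSpace Ω] (P : Measure Ω) [IsProbabilityMeasure P]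
  (L : Ω → ℝ) (hL : Measurable L) (hLi : Integrable L P)

lemma lossFn_eq (a b x : ℝ) (ha : a ≠ 0) :
    lossFn a b x = (1/a - b) * max x 0 + b * x := by
  have h := max_zero_sub_max_neg_zero_eq_self x
  have hneg : max (-x) 0 = max x 0 - x := by linarith
  unfold lossFn
  rw [hneg]
  field_simp
  ring

include hL hLi in
lemma oce_integrand (a b m : ℝ) (ha : a ≠ 0) :
    ∫ ω, lossFn a b (L ω - m) ∂P =
      (1/a - b) * (∫ ω, max (L ω - m) 0 ∂P) + b * ((∫ ω, L ω ∂P) - m) := by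
  have hmax : Integrable (fun ω => max (L ω - m) 0) P := (hLi.sub (integrable_const m)).pos_part
  have hsub : Integrable (fun ω => L ω - m) P := hLi.sub (integrable_const m)
  have h1 : ∫ ω, lossFn a b (L ω - m) ∂P =
      ∫ ω, ((1/a - b) * max (L ω - m) 0 + b * (L ω - m)) ∂P := by
    congr 1
    ext ω
    rw [lossFn_eq a b _ ha]
  rw [h1, integral_add (hmax.const_mul _) (hsub.const_mul _),
    integral_const_mul, integral_const_mul, integral_sub hLi (integrable_const m),
    integral_const]
  simp [measure_univ]

include hL hLi in
theorem main_meas (a b : ℝ) (ha : 0 < a) (ha1 : a < 1) (hb : 0 ≤ b) (hb1 : b < 1) :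
    OCE P L a b =
      (1 - b) * ES P L ((1 - a) / (1 - a * b)) + b * ∫ ω, L ω ∂P := by
  set lam := (1 - a) / (1 - a * b) with hlam
  have hab : 0 < 1 - a * b := by nlinarith
  have hlam0 : 0 < lam := div_pos (by linarith) hab
  have hlam1 : lam < 1 := (div_lt_one hab).2 (by nlinarith)
  have h1mlam : (1 : ℝ) - lam = a * (1 - b) / (1 - a * b) := by
    rw [hlam]
    field_simp
    ring
  have h1b : (1:ℝ) - b ≠ 0 := by linarith
  have hcval : (1 - b) * (1 - lam)⁻¹ = 1/a - b := by
    rw [h1mlam, inv_div]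
    field_simp
  have hES : ES P L lam = (1 - lam)⁻¹ * ∫ u in Ioc lam 1, leftQuantile P L u := by
    rw [ES, intervalIntegral.integral_of_le hlam1.le]
  -- formula for elements of the OCE set
  have hform : ∀ m : ℝ, m + ∫ ω, lossFn a b (L ω - m) ∂P =
      (1 - b) * (m + (1 - lam)⁻¹ * ∫ ω, max (L ω - m) 0 ∂P) + b * ∫ ω, L ω ∂P := by
    intro m
    rw [oce_integrand P L hL hLi a b m ha.ne', ← hcval]
    ring
  set target := (1 - b) * ES P L lam + b * ∫ ω, L ω ∂P with htarget
  have hlower : ∀ r ∈ {r : ℝ | ∃ m : ℝ, r = m + ∫ ω, lossFn a b (L ω - m) ∂P},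
      target ≤ r := by
    rintro r ⟨m, rfl⟩
    rw [hform m, htarget, hES]
    have := RU_lower P L hL hLi hlam0 hlam1 m
    nlinarith [this, sub_nonneg.2 hb1.le]
  have hmem : target ∈ {r : ℝ | ∃ m : ℝ, r = m + ∫ ω, lossFn a b (L ω - m) ∂P} := by
    refine ⟨leftQuantile P L lam, ?_⟩
    rw [hform, htarget, hES, RU_eq P L hL hLi hlam0 hlam1]
  rw [OCE]
  exact le_antisymm (csInf_le ⟨target, hlower⟩ hmem) (le_csInf ⟨target, hmem⟩ hlower)

end Main


/-- `R_{a,b}(L) = (1-b)·ES_{λ(a,b)}(L) + b·E[L]` with `λ(a,b) = (1-a)/(1-a*b)`. -/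
theorem oce_eq_expectedShortfall {Ω : Type*} [MeasurableSpace Ω] (P : Measure Ω)
    [IsProbabilityMeasure P] (L : Ω → ℝ) (hL : Integrable L P)
    (a b : ℝ) (ha : 0 < a) (ha1 : a < 1) (hb : 0 ≤ b) (hb1 : b < 1) :
    OCE P L a b =
      (1 - b) * ES P L ((1 - a) / (1 - a * b)) + b * ∫ ω, L ω ∂P := by
  set L' := hL.1.mk L with hL'
  have hae : L =ᵐ[P] L' := hL.1.ae_eq_mk
  have hmeas : Measurable L' := hL.1.stronglyMeasurable_mk.measurable
  have hint : Integrable L' P := hL.congr hae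
  have hOCE : OCE P L a b = OCE P L' a b := by
    unfold OCE
    congr 1
    ext r
    constructor <;> rintro ⟨m, rfl⟩ <;> refine ⟨m, ?_⟩ <;>
      [skip; skip] <;> congr 1 <;>
      exact integral_congr_ae (hae.mono fun ω h => by simp only [h])
  have hq : leftQuantile P L = leftQuantile P L' := by
    funext u
    unfold leftQuantile
    congr 1
    ext m
    simp only [Set.mem_setOf_eq]
    have hm : P {ω | L ω ≤ m} = P {ω | L' ω ≤ m} := by
      apply measure_congr
      exact hae.mono fun ω h => by
        change (L ω ≤ m) = (L' ω ≤ m)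
        rw [h]
    rw [hm]
  have hES : ES P L ((1 - a) / (1 - a * b)) = ES P L' ((1 - a) / (1 - a * b)) := by
    unfold ES
    rw [hq]
  have hEL : ∫ ω, L ω ∂P = ∫ ω, L' ω ∂P := integral_congr_ae hae
  rw [hOCE, hES, hEL]
  exact main_meas P L' hmeas hint a b ha ha1 hb hb1
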